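/- Let C be a small category and D a full subcategory. For presheaves F and G on C, the canonical map β_D(F × G) → (β_D F) × (β_D G) is a natural isomorphism; equivalently, (x₁, y₁) ∼_D (x₂, y₂) in (F × G)(X) if and only if x₁ ∼_D x₂ in F(X) and y₁ ∼_D y₂ in G(X). -/
import Mathlib

open CategoryTheory Opposite

universe u

/-- The relation `x ∼_D y` on `F(X)`. -/
def simD {C : Type u} [SmallCategory C] (P : C → Prop) (F : Cᵒᵖ ⥤ Type u)
    (X : C) (x y : F.obj (op X)) : Prop :=
  ∀ (D : C), P D → ∀ j : D ⟶ X, F.map j.op x = F.map j.op y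

/-- `β_D` commutes with binary products: a pair of sections `(x₁, y₁)` of the
product presheaf `F × G` is `∼_D`-equivalent to `(x₂, y₂)` if and only if
`x₁ ∼_D x₂` in `F(X)` and `y₁ ∼_D y₂` in `G(X)`, so that
`β_D (F × G) ≅ (β_D F) × (β_D G)`. -/
theorem betaD_prod {C : Type u} [SmallCategory C] (P : C → Prop)
    (F G : Cᵒᵖ ⥤ Type u) (X : C)
    (x₁ x₂ : F.obj (op X)) (y₁ y₂ : G.obj (op X)) :
    (∀ (D : C), P D → ∀ j : D ⟶ X,
        (F.map j.op x₁, G.map j.op y₁) = (F.map j.op x₂, G.map j.op y₂)) ↔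
      (simD P F X x₁ x₂ ∧ simD P G X y₁ y₂) := by
  constructor
  · intro h
    exact ⟨fun D hD j => (Prod.mk.injEq _ _ _ _ ▸ h D hD j).1,
           fun D hD j => (Prod.mk.injEq _ _ _ _ ▸ h D hD j).2⟩
  · rintro ⟨h1, h2⟩ D hD j
    rw [h1 D hD j, h2 D hD j]
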